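/- Certain answers for queries with negation: Let Q = (W, P⁺ AND ¬P₁ AND … AND ¬Pₙ) be a query with negation, and C a set of completeness statements. If C entails every negative crucial statement Compl(Pᵢ | P⁺) for i = 1,…,n, then for all graphs G, cert(Q, G, C) = ⟦Q⟧_G. -/

import Mathlib

namespace RDF

/-- Terms are variables or constants. -/
abbrev Term (V T : Type) := V ⊕ T
abbrev Triple (V T : Type) := Term V T × Term V T × Term V T
/-- A graph / basic graph pattern is a set of triples (patterns). -/
abbrev Graph (V T : Type) := Set (Triple V T)
abbrev BGP (V T : Type) := Set (Triple V T)
/-- A (partial) mapping from variables to terms. -/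
abbrev Mapping (V T : Type) := V → Option T

variable {V T : Type}

def applyTerm (μ : Mapping V T) : Term V T → Term V T
  | .inl v => (μ v).elim (.inl v) .inr
  | .inr t => .inr t

def applyTriple (μ : Mapping V T) (x : Triple V T) : Triple V T :=
  (applyTerm μ x.1, applyTerm μ x.2.1, applyTerm μ x.2.2)

/-- Instantiation μ(P) of a BGP. -/
def applyBGP (μ : Mapping V T) (P : BGP V T) : BGP V T :=
  applyTriple μ '' P

def dom (μ : Mapping V T) : Set V := {v | μ v ≠ none}

def varsTriple (x : Triple V T) : Set V :=
  {v | x.1 = .inl v ∨ x.2.1 = .inl v ∨ x.2.2 = .inl v}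

def vars (P : BGP V T) : Set V := ⋃ x ∈ P, varsTriple x

/-- ⟦P⟧_G = {μ | dom(μ) = var(P), μ(P) ⊆ G}. -/
def evalBGP (P : BGP V T) (G : Graph V T) : Set (Mapping V T) :=
  {μ | dom μ = vars P ∧ applyBGP μ P ⊆ G}

open Classical in
/-- Restriction μ|_W of a mapping to a set of variables. -/
noncomputable def restrictMap (W : Set V) (μ : Mapping V T) : Mapping V T :=
  fun v => if v ∈ W then μ v else none

/-- Evaluation of a positive query (W, P) with BGP P. -/
def evalPos (W : Set V) (P : BGP V T) (G : Graph V T) : Set (Mapping V T) :=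
  restrictMap W '' evalBGP P G

/-- A completeness statement Compl(pat | cond). -/
structure ComplStmt (V T : Type) where
  pat : BGP V T
  cond : BGP V T

/-- (G,G') ⊨ Compl(P1 | P2)  iff  ⋃{μ(P1) | μ(P1 ∪ P2) ⊆ G'} ⊆ G. -/
def sat (c : ComplStmt V T) (G G' : Graph V T) : Prop :=
  ∀ μ : Mapping V T, applyBGP μ (c.pat ∪ c.cond) ⊆ G' → applyBGP μ c.pat ⊆ G

def satSet (C : Set (ComplStmt V T)) (G G' : Graph V T) : Prop :=
  ∀ c ∈ C, sat c G G'

/-- Valid interpretations ext(G, C). -/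
def ext (G : Graph V T) (C : Set (ComplStmt V T)) : Set (Graph V T) :=
  {G' | G ⊆ G' ∧ satSet C G G'}

/-- Entailment C ⊨ c of a single completeness statement. -/
def entails (C : Set (ComplStmt V T)) (c : ComplStmt V T) : Prop :=
  ∀ G G' : Graph V T, G ⊆ G' → satSet C G G' → sat c G G'

/-- Entailment C ⊨ D of a set of completeness statements. -/
def entailsSet (C D : Set (ComplStmt V T)) : Prop :=
  ∀ G G' : Graph V T, G ⊆ G' → satSet C G G' → satSet D G G'

/-- Evaluation of the pattern P⁺ AND ¬P₁ AND … AND ¬Pₙ over G. -/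
def evalPattern (Pplus : BGP V T) (Ps : List (BGP V T)) (G : Graph V T) :
    Set (Mapping V T) :=
  {μ | μ ∈ evalBGP Pplus G ∧ ∀ Pi ∈ Ps, evalBGP (applyBGP μ Pi) G = ∅}

/-- Evaluation of a query with negation (W, P⁺ AND ¬P₁ … ¬Pₙ). -/
def evalQuery (W : Set V) (Pplus : BGP V T) (Ps : List (BGP V T)) (G : Graph V T) :
    Set (Mapping V T) :=
  restrictMap W '' evalPattern Pplus Ps G

/-- Certain answers w.r.t. completeness statements. -/
def cert {A : Type} (Q : Graph V T → Set A) (G : Graph V T)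
    (C : Set (ComplStmt V T)) : Set A :=
  ⋂ G' ∈ ext G C, Q G'

/-- Possible answers w.r.t. completeness statements. -/
def poss {A : Type} (Q : Graph V T → Set A) (G : Graph V T)
    (C : Set (ComplStmt V T)) : Set A :=
  ⋃ G' ∈ ext G C, Q G'

/-- Composition of partial mappings: apply ν first, then ρ to leftover variables. -/
def compMap (ν ρ : Mapping V T) : Mapping V T := fun v => (ν v).elim (ρ v) some

lemma applyTerm_comp (ν ρ : Mapping V T) (x : Term V T) :
    applyTerm ρ (applyTerm ν x) = applyTerm (compMap ν ρ) x := by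
  cases x with
  | inl v =>
    cases h : ν v <;> simp [applyTerm, compMap, h]
  | inr t => rfl

lemma applyTriple_comp (ν ρ : Mapping V T) (x : Triple V T) :
    applyTriple ρ (applyTriple ν x) = applyTriple (compMap ν ρ) x := by
  simp [applyTriple, applyTerm_comp]

lemma applyBGP_comp (ν ρ : Mapping V T) (P : BGP V T) :
    applyBGP ρ (applyBGP ν P) = applyBGP (compMap ν ρ) P := by
  simp [applyBGP, Set.image_image, applyTriple_comp]

lemma applyBGP_comp_of_dom (ν ρ : Mapping V T) (P : BGP V T)
    (hd : dom ν = vars P) : applyBGP (compMap ν ρ) P = applyBGP ν P := by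
  unfold applyBGP
  apply Set.image_congr
  intro x hx
  have hterm : ∀ t : Term V T, (∀ v, t = .inl v → v ∈ varsTriple x) →
      applyTerm (compMap ν ρ) t = applyTerm ν t := by
    intro t ht
    cases t with
    | inl v =>
      have hv : v ∈ vars P := Set.mem_biUnion hx (ht v rfl)
      rw [← hd] at hv
      cases h : ν v with
      | none => exact absurd h hv
      | some t => simp [applyTerm, compMap, h]
    | inr t => rfl
  obtain ⟨a, b, c⟩ := x
  simp only [applyTriple]
  refine congrArg₂ _ ?_ (congrArg₂ _ ?_ ?_) <;>
  · apply hterm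
    intro v hv
    simp [varsTriple, hv]

lemma applyBGP_mono (μ : Mapping V T) {P Q : BGP V T} (h : P ⊆ Q) :
    applyBGP μ P ⊆ applyBGP μ Q := Set.image_mono h

/-- certain answers for queries with negation:
    if C entails every negative crucial statement Compl(Pᵢ | P⁺),
    then cert(Q, G, C) = ⟦Q⟧_G. -/
theorem cert_queries_with_negation {V T : Type} (W : Set V)
    (Pplus : BGP V T) (Ps : List (BGP V T)) (hW : W ⊆ vars Pplus)
    (C : Set (ComplStmt V T))
    (h : ∀ Pi ∈ Ps, entails C ⟨Pi, Pplus⟩) :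
    ∀ G : Graph V T,
      cert (evalQuery W Pplus Ps) G C = evalQuery W Pplus Ps G := by
  intro G
  apply Set.Subset.antisymm
  · -- cert ⊆ eval, since G ∈ ext G C
    intro a ha
    have hG : G ∈ ext G C := by
      refine ⟨le_refl _, ?_⟩
      intro c _ μ hμ
      exact (applyBGP_mono μ Set.subset_union_left).trans hμ
    exact Set.mem_iInter₂.1 ha G hG
  · intro a ha
    apply Set.mem_iInter₂.2
    intro G' hG'
    obtain ⟨hGG', hsat⟩ := hG'
    obtain ⟨ν, ⟨⟨hdom, hsub⟩, hneg⟩, hrest⟩ := ha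
    refine ⟨ν, ⟨⟨hdom, hsub.trans hGG'⟩, ?_⟩, hrest⟩
    intro Pi hPi
    rw [Set.eq_empty_iff_forall_notMem]
    rintro ρ ⟨hρdom, hρsub⟩
    have hsatc : sat ⟨Pi, Pplus⟩ G G' := h Pi hPi G G' hGG' hsat
    have hcomp : applyBGP (compMap ν ρ) (Pi ∪ Pplus) ⊆ G' := by
      rw [show ((⟨Pi, Pplus⟩ : ComplStmt V T).pat ∪ _ = Pi ∪ Pplus) from rfl,
        applyBGP, Set.image_union]
      apply Set.union_subset
      · rw [show (applyTriple (compMap ν ρ) '' Pi = applyBGP (compMap ν ρ) Pi) from rfl,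
          ← applyBGP_comp]
        exact hρsub
      · rw [show (applyTriple (compMap ν ρ) '' Pplus = applyBGP (compMap ν ρ) Pplus) from rfl,
          applyBGP_comp_of_dom ν ρ Pplus hdom]
        exact hsub.trans hGG'
    have hPiG : applyBGP (compMap ν ρ) Pi ⊆ G := hsatc _ hcomp
    rw [← applyBGP_comp] at hPiG
    have : ρ ∈ evalBGP (applyBGP ν Pi) G := ⟨hρdom, hPiG⟩
    rw [hneg Pi hPi] at this
    exact this

end RDF
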